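/- Let a(n) denote the number of permutations of length n (with a(0) = 1 for the empty permutation) that avoid all three of the patterns 2314, 2413, and 3412. Then the formal power series F(z) = Σ_{n≥0} a(n) z^n over ℚ satisfies the identity (1 + z − 2z(2 − z)·F(z))² = 1 − 6z + 5z² in ℚ[[z]]. -/

import Mathlib

/-- `σ` contains an occurrence of the pattern `π` using only positions in `S`. -/
def ContainsIn {n m : ℕ} (σ : Equiv.Perm (Fin n)) (π : Equiv.Perm (Fin m))
    (S : Set (Fin n)) : Prop :=
  ∃ f : Fin m → Fin n, StrictMono f ∧ (∀ s, f s ∈ S) ∧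
    ∀ s t : Fin m, σ (f s) < σ (f t) ↔ π s < π t

/-- `σ` contains an occurrence of the pattern `π`. -/
def Contains {n m : ℕ} (σ : Equiv.Perm (Fin n)) (π : Equiv.Perm (Fin m)) : Prop :=
  ContainsIn σ π Set.univ

/-- `σ` avoids the pattern `π`. -/
def Avoids {n m : ℕ} (σ : Equiv.Perm (Fin n)) (π : Equiv.Perm (Fin m)) : Prop :=
  ¬ Contains σ π

/-- `σ` lies in the juxtaposition class `Av(P|Q)`: positions split at some cut `k`
(`0 ≤ k ≤ n`), no occurrence of `P` within the first `k` positions and no occurrence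
of `Q` within the remaining positions. -/
def JuxtAv {n p q : ℕ} (P : Equiv.Perm (Fin p)) (Q : Equiv.Perm (Fin q))
    (σ : Equiv.Perm (Fin n)) : Prop :=
  ∃ k ≤ n, ¬ ContainsIn σ P {i : Fin n | (i : ℕ) < k} ∧
    ¬ ContainsIn σ Q {i : Fin n | k ≤ (i : ℕ)}

noncomputable def p2314 : Equiv.Perm (Fin 4) :=
  Equiv.ofBijective (![1,2,0,3] : Fin 4 → Fin 4) (by decide)

noncomputable def p2413 : Equiv.Perm (Fin 4) :=
  Equiv.ofBijective (![1,3,0,2] : Fin 4 → Fin 4) (by decide)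

noncomputable def p3412 : Equiv.Perm (Fin 4) :=
  Equiv.ofBijective (![2,3,0,1] : Fin 4 → Fin 4) (by decide)

noncomputable def F : PowerSeries ℚ :=
  PowerSeries.mk fun n => (Nat.card {σ : Equiv.Perm (Fin n) // Avoids σ p2314 ∧ Avoids σ p2413 ∧ Avoids σ p3412} : ℚ)

open Equiv Finset

/-- A "bad configuration": an ascent, then a smaller element, then an element above it. -/
def Bad {n : ℕ} (σ : Perm (Fin n)) : Prop :=
  ∃ i j k l : Fin n, i < j ∧ j < k ∧ k < l ∧ σ i < σ j ∧ σ k < σ i ∧ σ k < σ l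

def Good {n : ℕ} (σ : Perm (Fin n)) : Prop := ¬ Bad σ

lemma good_iff {n : ℕ} (σ : Perm (Fin n)) :
    (Avoids σ p2314 ∧ Avoids σ p2413 ∧ Avoids σ p3412) ↔ Good σ := by
  constructor
  · rintro ⟨h1, h2, h3⟩ ⟨i, j, k, l, hij, hjk, hkl, v1, v2, v3⟩
    have hik := hij.trans hjk
    have hil := hik.trans hkl
    have hjl := hjk.trans hkl
    have hsm : StrictMono (![i,j,k,l] : Fin 4 → Fin n) := by
      intro a b hab
      fin_cases a <;> fin_cases b <;> simp_all <;> omega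
    have e1 : σ k < σ j := v2.trans v1
    rcases lt_trichotomy (σ l) (σ i) with hl | hl | hl
    · -- pattern 3412
      refine h3 ⟨![i,j,k,l], hsm, fun s => Set.mem_univ _, ?_⟩
      intro s t
      have e2 : σ l < σ j := hl.trans v1
      fin_cases s <;> fin_cases t <;>
        simp +decide [p3412, Equiv.ofBijective] <;> omega
    · exact absurd (σ.injective hl) (Fin.ne_of_lt hil).symm
    · rcases lt_trichotomy (σ l) (σ j) with hl2 | hl2 | hl2
      · -- pattern 2413
        refine h2 ⟨![i,j,k,l], hsm, fun s => Set.mem_univ _, ?_⟩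
        intro s t
        fin_cases s <;> fin_cases t <;>
          simp +decide [p2413, Equiv.ofBijective] <;> omega
      · exact absurd (σ.injective hl2) (Fin.ne_of_lt hjl).symm
      · -- pattern 2314
        refine h1 ⟨![i,j,k,l], hsm, fun s => Set.mem_univ _, ?_⟩
        intro s t
        fin_cases s <;> fin_cases t <;>
          simp +decide [p2314, Equiv.ofBijective] <;> omega
  · intro hg
    refine ⟨?_, ?_, ?_⟩ <;> rintro ⟨f, hsm, -, hiff⟩ <;>
      refine hg ⟨f 0, f 1, f 2, f 3,
        hsm (by decide), hsm (by decide), hsm (by decide), ?_, ?_, ?_⟩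
    · exact (hiff 0 1).mpr (by simp +decide [p2314, Equiv.ofBijective])
    · exact (hiff 2 0).mpr (by simp +decide [p2314, Equiv.ofBijective])
    · exact (hiff 2 3).mpr (by simp +decide [p2314, Equiv.ofBijective])
    · exact (hiff 0 1).mpr (by simp +decide [p2413, Equiv.ofBijective])
    · exact (hiff 2 0).mpr (by simp +decide [p2413, Equiv.ofBijective])
    · exact (hiff 2 3).mpr (by simp +decide [p2413, Equiv.ofBijective])
    · exact (hiff 0 1).mpr (by simp +decide [p3412, Equiv.ofBijective])
    · exact (hiff 2 0).mpr (by simp +decide [p3412, Equiv.ofBijective])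
    · exact (hiff 2 3).mpr (by simp +decide [p3412, Equiv.ofBijective])

instance {n : ℕ} (σ : Equiv.Perm (Fin n)) : Decidable (Good σ) := by
  unfold Good Bad; infer_instance

open scoped Classical in
lemma good_iff_card (m : ℕ) : (PowerSeries.coeff m) F
    = ((∑ σ : Equiv.Perm (Fin m), if Good σ then 1 else 0 : ℕ) : ℚ) := by
  rw [F, PowerSeries.coeff_mk]
  congr 1
  rw [Nat.card_eq_fintype_card, Fintype.card_subtype, Finset.card_filter]
  exact Finset.sum_congr rfl fun σ _ => by
    by_cases h : Good σ
    · rw [if_pos ((good_iff σ).mpr h), if_pos h]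
    · rw [if_neg (fun hc => h ((good_iff σ).mp hc)), if_neg h]

open PowerSeries

variable {n : ℕ}


variable {n : ℕ}

/-- Insert a new minimum at position `p`. -/
def ins (τ : Perm (Fin n)) (p : Fin (n + 1)) : Perm (Fin (n + 1)) :=
  ((finSuccEquiv' p).trans (Equiv.optionCongr τ)).trans (finSuccEquiv' 0).symm

lemma ins_self (τ : Perm (Fin n)) (p : Fin (n+1)) : ins τ p p = 0 := by
  simp [ins, finSuccEquiv'_at, finSuccEquiv'_symm_none]

lemma ins_succAbove (τ : Perm (Fin n)) (p : Fin (n+1)) (i : Fin n) :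
    ins τ p (p.succAbove i) = (τ i).succ := by
  simp [ins, finSuccEquiv'_succAbove, finSuccEquiv'_symm_some, Fin.zero_succAbove]

lemma succAbove_mk {p : Fin (n+1)} {x : Fin (n+1)} (h : (x : ℕ) < (p : ℕ)) :
    p.succAbove ⟨(x : ℕ), lt_of_lt_of_le h (Fin.is_le p)⟩ = x := by
  have hlt : Fin.castSucc (⟨(x : ℕ), lt_of_lt_of_le h (Fin.is_le p)⟩ : Fin n) < p := by
    rw [Fin.lt_def, Fin.coe_castSucc]
    exact h
  rw [Fin.succAbove_of_castSucc_lt _ _ hlt]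
  ext
  simp

lemma ins_apply_of_val_lt (τ : Perm (Fin n)) (p : Fin (n+1)) {x : Fin (n+1)}
    (h : (x : ℕ) < (p : ℕ)) :
    ins τ p x = (τ ⟨(x : ℕ), lt_of_lt_of_le h (Fin.is_le p)⟩).succ := by
  conv_lhs => rw [← succAbove_mk h]
  rw [ins_succAbove]

lemma ins_pos (τ : Perm (Fin n)) (p : Fin (n+1)) {x : Fin (n+1)} (h : x ≠ p) :
    0 < ins τ p x := by
  obtain ⟨i, hi⟩ := Fin.exists_succAbove_eq h
  rw [← hi, ins_succAbove]
  exact Fin.succ_pos _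

def DecrTo (τ : Perm (Fin n)) (c : ℕ) : Prop :=
  ∀ i j : Fin n, i < j → (j : ℕ) < c → τ j < τ i

instance (τ : Perm (Fin n)) (c : ℕ) : Decidable (DecrTo τ c) := by
  unfold DecrTo; infer_instance

lemma decrTo_anti {τ : Perm (Fin n)} {c c' : ℕ} (h : c ≤ c') (hd : DecrTo τ c') :
    DecrTo τ c := fun i j hij hj => hd i j hij (lt_of_lt_of_le hj h)

lemma decrTo_one {τ : Perm (Fin n)} : DecrTo τ 1 := by
  intro i j hij hj
  have hi : (i : ℕ) < (j : ℕ) := hij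
  omega

def dstat (τ : Perm (Fin n)) : ℕ := Nat.findGreatest (DecrTo τ) n

lemma dstat_le (τ : Perm (Fin n)) : dstat τ ≤ n := Nat.findGreatest_le n

lemma decrTo_dstat (τ : Perm (Fin n)) : DecrTo τ (dstat τ) :=
  Nat.findGreatest_spec (Nat.zero_le n) (fun _ j _ hj => absurd hj (by omega))

lemma le_dstat_iff {τ : Perm (Fin n)} {c : ℕ} (hc : c ≤ n) :
    c ≤ dstat τ ↔ DecrTo τ c :=
  ⟨fun h => decrTo_anti h (decrTo_dstat τ), fun h => Nat.le_findGreatest hc h⟩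

lemma one_le_dstat (τ : Perm (Fin n)) (hn : 1 ≤ n) : 1 ≤ dstat τ :=
  (le_dstat_iff hn).mpr decrTo_one

lemma dstat_eq_of {τ : Perm (Fin n)} {d : ℕ} (h1 : DecrTo τ d) (hd : d ≤ n)
    (h2 : ¬ DecrTo τ (d+1)) : dstat τ = d := by
  refine le_antisymm ?_ ((le_dstat_iff hd).mpr h1)
  by_contra h
  exact h2 (decrTo_anti (by omega) (decrTo_dstat τ))

lemma dstat_rev : dstat (Fin.revPerm : Perm (Fin n)) = n := by
  refine le_antisymm (dstat_le _) ((le_dstat_iff le_rfl).mpr ?_)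
  intro i j hij _
  simpa using hij

lemma good_rev : Good (Fin.revPerm : Perm (Fin n)) := by
  rintro ⟨i, j, k, l, hij, -, -, v1, -⟩
  simp only [Fin.revPerm_apply] at v1
  exact absurd (Fin.rev_lt_rev.mp v1) (lt_asymm hij)

lemma eq_rev_of_dstat {τ : Perm (Fin n)} (h : dstat τ = n) : τ = Fin.revPerm := by
  have hD : DecrTo τ n := (le_dstat_iff le_rfl).mp (le_of_eq h.symm)
  have hsm : StrictMono (fun x : Fin n => τ x.rev) := by
    intro a b hab
    exact hD b.rev a.rev (Fin.rev_lt_rev.mpr hab) (Fin.is_lt _)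
  have hid : (fun x : Fin n => τ x.rev) = id := by
    apply (hsm.range_inj strictMono_id).mp
    rw [Set.range_id]
    exact Set.range_eq_univ.mpr ((Equiv.surjective τ).comp Fin.rev_surjective)
  refine Equiv.ext fun x => ?_
  rw [Fin.revPerm_apply]
  have := congrFun hid x.rev
  simpa [Fin.rev_rev] using this

lemma bad_ins_iff (τ : Perm (Fin n)) (p : Fin (n+1)) :
    Bad (ins τ p) ↔ Bad τ ∨ ((p : ℕ) < n ∧ ¬ DecrTo τ p) := by
  constructor
  · rintro ⟨a, b, c, d, hab, hbc, hcd, w1, w2, w3⟩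
    have hdp : d ≠ p := by
      intro h; rw [h, ins_self] at w3; exact absurd w3 (Fin.not_lt_zero _)
    have hap : a ≠ p := by
      intro h; rw [h, ins_self] at w2; exact absurd w2 (Fin.not_lt_zero _)
    have hbp : b ≠ p := by
      intro h; rw [h, ins_self] at w1
      exact absurd (w2.trans w1) (Fin.not_lt_zero _)
    by_cases hcp : c = p
    · right
      subst hcp
      constructor
      · have h1 : (c : ℕ) < (d : ℕ) := hcd
        have h2 : (d : ℕ) ≤ n := Fin.is_le d
        omega
      · intro hD
        have hbc' : (b : ℕ) < (c : ℕ) := hbc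
        have hab' : (a : ℕ) < (b : ℕ) := hab
        rw [ins_apply_of_val_lt τ c (hab'.trans hbc'), ins_apply_of_val_lt τ c hbc'] at w1
        have hv := Fin.succ_lt_succ_iff.mp w1
        exact absurd (hD _ _ (Fin.mk_lt_mk.mpr hab') hbc') (lt_asymm hv)
    · left
      obtain ⟨i, hi⟩ := Fin.exists_succAbove_eq hap
      obtain ⟨j, hj⟩ := Fin.exists_succAbove_eq hbp
      obtain ⟨k, hk⟩ := Fin.exists_succAbove_eq hcp
      obtain ⟨l, hl⟩ := Fin.exists_succAbove_eq hdp
      subst hi hj hk hl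
      refine ⟨i, j, k, l, Fin.succAbove_lt_succAbove_iff.mp hab,
        Fin.succAbove_lt_succAbove_iff.mp hbc, Fin.succAbove_lt_succAbove_iff.mp hcd, ?_, ?_, ?_⟩
      · rw [ins_succAbove, ins_succAbove] at w1; exact Fin.succ_lt_succ_iff.mp w1
      · rw [ins_succAbove, ins_succAbove] at w2; exact Fin.succ_lt_succ_iff.mp w2
      · rw [ins_succAbove, ins_succAbove] at w3; exact Fin.succ_lt_succ_iff.mp w3
  · rintro (⟨i, j, k, l, hij, hjk, hkl, v1, v2, v3⟩ | ⟨hpn, hD⟩)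
    · refine ⟨p.succAbove i, p.succAbove j, p.succAbove k, p.succAbove l,
        Fin.succAbove_lt_succAbove_iff.mpr hij, Fin.succAbove_lt_succAbove_iff.mpr hjk,
        Fin.succAbove_lt_succAbove_iff.mpr hkl, ?_, ?_, ?_⟩ <;>
        rw [ins_succAbove, ins_succAbove]
      · exact Fin.succ_lt_succ_iff.mpr v1
      · exact Fin.succ_lt_succ_iff.mpr v2
      · exact Fin.succ_lt_succ_iff.mpr v3
    · unfold DecrTo at hD
      push_neg at hD
      obtain ⟨i, j, hij, hjp, hv⟩ := hD
      have hvij : τ i < τ j :=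
        lt_of_le_of_ne hv ((Equiv.injective τ).ne_iff.mpr (Fin.ne_of_lt hij))
      have hijv : (i : ℕ) < (j : ℕ) := hij
      set a : Fin (n+1) := Fin.castSucc i with ha
      set b : Fin (n+1) := Fin.castSucc j with hb
      set dd : Fin (n+1) := ⟨(p : ℕ) + 1, by omega⟩ with hdd
      refine ⟨a, b, p, dd, ?_, ?_, ?_, ?_, ?_, ?_⟩
      · exact Fin.castSucc_lt_castSucc_iff.mpr hij
      · simpa [hb, Fin.lt_def] using hjp
      · simp [hdd, Fin.lt_def]
      · rw [ha, hb,
          ins_apply_of_val_lt τ p (show ((Fin.castSucc i : Fin (n+1)) : ℕ) < (p:ℕ) by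
            simpa using hijv.trans hjp),
          ins_apply_of_val_lt τ p (show ((Fin.castSucc j : Fin (n+1)) : ℕ) < (p:ℕ) by
            simpa using hjp)]
        refine Fin.succ_lt_succ_iff.mpr ?_
        exact hvij
      · rw [ins_self, ha,
          ins_apply_of_val_lt τ p (show ((Fin.castSucc i : Fin (n+1)) : ℕ) < (p:ℕ) by
            simpa using hijv.trans hjp)]
        exact Fin.succ_pos _
      · rw [ins_self]
        exact ins_pos τ p (Fin.ne_of_val_ne (Nat.succ_ne_self (p : ℕ)))

lemma good_ins_iff (τ : Perm (Fin n)) (p : Fin (n+1)) :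
    Good (ins τ p) ↔ Good τ ∧ ((p : ℕ) = n ∨ DecrTo τ p) := by
  have hple : (p : ℕ) ≤ n := Fin.is_le p
  rw [Good, Good, bad_ins_iff]
  by_cases h1 : Bad τ <;> by_cases h2 : DecrTo τ (p : ℕ) <;> simp [h1, h2] <;> omega

lemma dstat_ins_of_lt (τ : Perm (Fin n)) (p : Fin (n+1)) (hp : (p : ℕ) < n)
    (hd : DecrTo τ p) : dstat (ins τ p) = (p : ℕ) + 1 := by
  refine dstat_eq_of ?_ (by omega) ?_
  · intro a b hab hb
    have hab' : (a : ℕ) < (b : ℕ) := hab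
    by_cases hbp : b = p
    · rw [hbp, ins_self]
      exact ins_pos τ p (by rw [← hbp]; exact Fin.ne_of_lt hab)
    · have hbn : (b : ℕ) < (p : ℕ) := by
        have h1 : (b : ℕ) ≠ (p : ℕ) := fun h => hbp (Fin.ext h)
        omega
      rw [ins_apply_of_val_lt τ p (hab'.trans hbn), ins_apply_of_val_lt τ p hbn]
      exact Fin.succ_lt_succ_iff.mpr (hd _ _ hab' hbn)
  · intro hD
    have h1 : (p : ℕ) < ((⟨(p : ℕ) + 1, by omega⟩ : Fin (n+1)) : ℕ) := by simp
    have := hD p ⟨(p : ℕ) + 1, by omega⟩ h1 (by simp)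
    rw [ins_self] at this
    exact absurd this (Fin.not_lt_zero _)

lemma dstat_ins_last_of_eq (τ : Perm (Fin n)) (p : Fin (n+1)) (hp : (p : ℕ) = n)
    (hτ : dstat τ = n) : dstat (ins τ p) = n + 1 := by
  refine le_antisymm (dstat_le _) ((le_dstat_iff le_rfl).mpr ?_)
  intro a b hab _
  have hab' : (a : ℕ) < (b : ℕ) := hab
  by_cases hbp : b = p
  · rw [hbp, ins_self]
    exact ins_pos τ p (by rw [← hbp]; exact Fin.ne_of_lt hab)
  · have hbn : (b : ℕ) < (p : ℕ) := by
      have h1 : (b : ℕ) ≠ (p : ℕ) := fun h => hbp (Fin.ext h)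
      have h2 := Fin.is_le b
      omega
    rw [ins_apply_of_val_lt τ p (hab'.trans hbn), ins_apply_of_val_lt τ p hbn]
    refine Fin.succ_lt_succ_iff.mpr ?_
    have hDn : DecrTo τ n := (le_dstat_iff le_rfl).mp (le_of_eq hτ.symm)
    exact hDn _ _ hab' (show (b : ℕ) < n by omega)

lemma dstat_ins_last_of_lt (τ : Perm (Fin n)) (p : Fin (n+1)) (hp : (p : ℕ) = n)
    (hτ : dstat τ < n) : dstat (ins τ p) = dstat τ := by
  set d := dstat τ with hdd
  refine dstat_eq_of ?_ (by omega) ?_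
  · intro a b hab hb
    have hab' : (a : ℕ) < (b : ℕ) := hab
    have hbn : (b : ℕ) < (p : ℕ) := by omega
    rw [ins_apply_of_val_lt τ p (hab'.trans hbn), ins_apply_of_val_lt τ p hbn]
    exact Fin.succ_lt_succ_iff.mpr (decrTo_dstat τ _ _ hab' (show (b : ℕ) < dstat τ by omega))
  · intro hD
    have hnd : ¬ DecrTo τ (d + 1) := by
      intro h
      have := (le_dstat_iff (by omega)).mpr h
      omega
    unfold DecrTo at hnd
    push_neg at hnd
    obtain ⟨i, j, hij, hjd, hv⟩ := hnd
    have hijv : (i : ℕ) < (j : ℕ) := hij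
    have hjp : (j : ℕ) < (p : ℕ) := by have h3 := Fin.is_lt j; omega
    have key := hD (Fin.castSucc i) (Fin.castSucc j)
      (Fin.castSucc_lt_castSucc_iff.mpr hij) (by simpa using hjd)
    rw [ins_apply_of_val_lt τ p (show ((Fin.castSucc i : Fin (n+1)) : ℕ) < (p : ℕ) by
          simpa using hijv.trans hjp),
        ins_apply_of_val_lt τ p (show ((Fin.castSucc j : Fin (n+1)) : ℕ) < (p : ℕ) by
          simpa using hjp)] at key
    have key' := Fin.succ_lt_succ_iff.mp key
    have keq : τ j < τ i := key'
    exact absurd (lt_of_lt_of_le keq hv) (lt_irrefl _)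

lemma ins_bijective :
    Function.Bijective (fun tp : Perm (Fin n) × Fin (n+1) => ins tp.1 tp.2) := by
  rw [Fintype.bijective_iff_injective_and_card]
  constructor
  · rintro ⟨τ, p⟩ ⟨τ', p'⟩ h
    simp only at h
    have hp : p = p' := by
      have h2 : ins τ p p' = 0 := by rw [h]; exact ins_self τ' p'
      exact Equiv.injective (ins τ p) ((ins_self τ p).trans h2.symm)
    subst hp
    have hτ : τ = τ' := by
      refine Equiv.ext fun i => ?_
      have := congrArg (fun e : Perm (Fin (n+1)) => e (p.succAbove i)) h
      simp only [ins_succAbove] at this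
      exact Fin.succ_injective _ this
    rw [hτ]
  · simp [Fintype.card_perm, Fintype.card_prod, Fintype.card_fin, Nat.factorial_succ,
      Nat.mul_comm]

open Finset in

private def useq : ℕ → ℚ
  | 0 => 1
  | 1 => 1
  | (k+2) => useq (k+1) + ∑ i : Fin (k+2), useq i * useq (k+1-i)
  decreasing_by
  · omega
  · exact i.isLt
  · omega

noncomputable def U : ℚ⟦X⟧ := PowerSeries.mk useq

lemma constantCoeff_U : constantCoeff U = 1 := by
  rw [U, constantCoeff_mk]
  simp [useq]

lemma hK : X * U ^ 2 = (1 - X) * (U - 1) := by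
  have hsplit : (1 - X) * (U - 1) = (U - 1) - X * (U - 1) := by ring
  ext k
  rcases k with _ | k
  · rw [coeff_zero_eq_constantCoeff, map_mul, map_mul, map_sub, map_sub, map_one,
      constantCoeff_X, constantCoeff_U]
    ring
  · rw [pow_two, PowerSeries.coeff_succ_X_mul, PowerSeries.coeff_mul, hsplit, map_sub,
      map_sub, PowerSeries.coeff_succ_X_mul, map_sub]
    rw [Finset.Nat.sum_antidiagonal_eq_sum_range_succ_mk]
    simp only [U, coeff_mk, PowerSeries.coeff_one]
    rcases k with _ | k
    · norm_num [useq]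
    · rw [show useq (k+1+1) = useq (k+1) + ∑ i : Fin (k+2), useq i * useq (k+1-i) from by
        rw [useq]]
      rw [Fin.sum_univ_eq_sum_range (fun i => useq i * useq (k+1-i))]
      simp


noncomputable def gser (m : ℕ) : ℚ⟦X⟧ :=
  ∑ σ : Perm (Fin m), if Good σ then U ^ dstat σ else 0

noncomputable def aq (m : ℕ) : ℚ⟦X⟧ :=
  ∑ σ : Perm (Fin m), if Good σ then 1 else 0

lemma aq_eq (m : ℕ) : aq m = PowerSeries.C ((PowerSeries.coeff m) F) := by
  rw [good_iff_card m, aq]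
  push_cast
  rw [map_sum]
  refine Finset.sum_congr rfl fun σ _ => ?_
  by_cases h : Good σ <;> simp [h]

lemma gser_zero : gser 0 = 1 := by
  rw [gser]
  have h1 : (Finset.univ : Finset (Perm (Fin 0))) = {1} := by
    apply Finset.eq_singleton_iff_unique_mem.mpr
    exact ⟨Finset.mem_univ _, fun τ _ => Subsingleton.elim τ 1⟩
  rw [h1, Finset.sum_singleton]
  have hg : Good (1 : Perm (Fin 0)) := by
    rintro ⟨i, -, -, -, -⟩
    exact i.elim0
  rw [if_pos hg]
  have : dstat (1 : Perm (Fin 0)) = 0 := Nat.le_zero.mp (dstat_le _)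
  rw [this, pow_zero]

lemma hgeom (t : ℕ) : (U - 1) * ∑ c ∈ range t, U^(c+1) = U * (U^t - 1) := by
  have h1 : ∑ c ∈ range t, U^(c+1) = (∑ c ∈ range t, U^c) * U := by
    rw [Finset.sum_mul]
    exact Finset.sum_congr rfl fun c _ => (pow_succ U c)
  rw [h1]
  have h2 := geom_sum_mul U t
  linear_combination U * h2

lemma step (m : ℕ) :
    X*(U - 1)*gser (m+1) = (U - 1)*gser m - X*U*aq m - X*(U - 1)*U^m := by
  have hre : gser (m+1)
      = ∑ τ : Perm (Fin m), ∑ p : Fin (m+1),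
          (if Good (ins τ p) then U ^ dstat (ins τ p) else 0) := by
    calc gser (m+1)
        = ∑ tp : Perm (Fin m) × Fin (m+1),
            (if Good (ins tp.1 tp.2) then U ^ dstat (ins tp.1 tp.2) else 0) :=
          (Fintype.sum_bijective _ ins_bijective _ _ fun tp => rfl).symm
      _ = ∑ τ : Perm (Fin m), ∑ p : Fin (m+1),
            (if Good (ins τ p) then U ^ dstat (ins τ p) else 0) :=
          Fintype.sum_prod_type _
  have hinner : ∀ τ : Perm (Fin m),
      (∑ p : Fin (m+1), if Good (ins τ p) then U ^ dstat (ins τ p) else 0)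
        = (if Good τ then
            ((∑ c ∈ range m, if c ≤ dstat τ then U^(c+1) else 0)
              + (if dstat τ = m then U^(m+1) else U^(dstat τ))) else 0) := by
    intro τ
    by_cases hτ : Good τ
    · rw [if_pos hτ, Fin.sum_univ_castSucc]
      congr 1
      · have hterm : ∀ q : Fin m,
            (if Good (ins τ (Fin.castSucc q)) then U ^ dstat (ins τ (Fin.castSucc q)) else 0)
              = (fun c : ℕ => if c ≤ dstat τ then U^(c+1) else 0) (q : ℕ) := by
          intro q
          have hq : ((Fin.castSucc q : Fin (m+1)) : ℕ) = (q : ℕ) := Fin.coe_castSucc q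
          by_cases hc : (q : ℕ) ≤ dstat τ
          · have hD : DecrTo τ (q : ℕ) := (le_dstat_iff (le_of_lt q.isLt)).mp hc
            have hgood : Good (ins τ (Fin.castSucc q)) :=
              (good_ins_iff τ _).mpr ⟨hτ, Or.inr (by rw [hq]; exact hD)⟩
            rw [if_pos hgood, dstat_ins_of_lt τ _ (by rw [hq]; exact q.isLt)
              (by rw [hq]; exact hD), hq]
            simp [hc]
          · have hbad : ¬ Good (ins τ (Fin.castSucc q)) := by
              intro hg
              rcases ((good_ins_iff τ _).mp hg).2 with h | h
              · rw [hq] at h; exact absurd h (Nat.ne_of_lt q.isLt)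
              · rw [hq] at h
                exact hc ((le_dstat_iff (le_of_lt q.isLt)).mpr h)
            rw [if_neg hbad]
            simp [hc]
        rw [Finset.sum_congr rfl fun q _ => hterm q]
        exact Fin.sum_univ_eq_sum_range (fun c : ℕ => if c ≤ dstat τ then U^(c+1) else 0) m
      · have hgood : Good (ins τ (Fin.last m)) :=
          (good_ins_iff τ _).mpr ⟨hτ, Or.inl (Fin.val_last m)⟩
        rw [if_pos hgood]
        by_cases hdm : dstat τ = m
        · rw [if_pos hdm, dstat_ins_last_of_eq τ _ (Fin.val_last m) hdm]
        · rw [if_neg hdm,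
            dstat_ins_last_of_lt τ _ (Fin.val_last m) (lt_of_le_of_ne (dstat_le τ) hdm)]
    · rw [if_neg hτ]
      refine Finset.sum_eq_zero fun p _ => ?_
      rw [if_neg (fun hg => hτ ((good_ins_iff τ p).mp hg).1)]
  rw [hre, Finset.sum_congr rfl fun τ _ => hinner τ, Finset.mul_sum]
  have key : ∀ τ : Perm (Fin m),
      X*(U-1)*(if Good τ then
          ((∑ c ∈ range m, if c ≤ dstat τ then U^(c+1) else 0)
            + (if dstat τ = m then U^(m+1) else U^(dstat τ))) else 0)
        = (if Good τ then (U-1)*U^(dstat τ) else 0) - (if Good τ then X*U else 0)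
          - (if τ = Fin.revPerm then X*(U-1)*U^m else 0) := by
    intro τ
    by_cases hτ : Good τ
    · rw [if_pos hτ, if_pos hτ, if_pos hτ]
      have hd := dstat_le τ
      have hfilter : (∑ c ∈ range m, if c ≤ dstat τ then U^(c+1) else 0)
          = ∑ c ∈ range (min (dstat τ + 1) m), U^(c+1) := by
        rw [← Finset.sum_filter]
        congr 1
        ext c
        simp only [Finset.mem_filter, Finset.mem_range, Finset.mem_range]
        omega
      by_cases hdm : dstat τ = m
      · rw [if_pos hdm, if_pos (eq_rev_of_dstat hdm ▸ rfl : τ = Fin.revPerm)]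
        rw [hfilter, hdm, min_eq_right (by omega)]
        have hg := hgeom m
        rw [hdm] at *
        linear_combination X*hg + (U^m) * hK
      · have hnrev : τ ≠ Fin.revPerm := by
          intro h; rw [h] at hdm; exact hdm dstat_rev
        rw [if_neg hdm, if_neg hnrev, hfilter, min_eq_left (by omega)]
        have hg := hgeom (dstat τ + 1)
        linear_combination X*hg + (U^(dstat τ)) * hK
    · have hnrev : τ ≠ Fin.revPerm := by
        intro h; rw [h] at hτ; exact hτ good_rev
      rw [if_neg hτ, if_neg hτ, if_neg hτ, if_neg hnrev]
      ring
  rw [Finset.sum_congr rfl fun τ _ => key τ]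
  rw [Finset.sum_sub_distrib, Finset.sum_sub_distrib]
  have t1 : (∑ τ : Perm (Fin m), if Good τ then (U-1)*U^(dstat τ) else 0)
      = (U-1)*gser m := by
    rw [gser, Finset.mul_sum]
    refine Finset.sum_congr rfl fun τ _ => ?_
    by_cases h : Good τ <;> simp [h]
  have t2 : (∑ τ : Perm (Fin m), if Good τ then X*U else 0) = X*U*aq m := by
    rw [aq, Finset.mul_sum]
    refine Finset.sum_congr rfl fun τ _ => ?_
    by_cases h : Good τ <;> simp [h]
  have t3 : (∑ τ : Perm (Fin m), if τ = Fin.revPerm then X*(U-1)*U^m else 0)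
      = X*(U-1)*U^m := by
    rw [Finset.sum_ite_eq' Finset.univ Fin.revPerm (fun _ => X*(U-1)*U^m)]
    exact if_pos (Finset.mem_univ _)
  rw [t1, t2, t3]

lemma tele (M : ℕ) :
    X^(M+1)*((U - 1)*gser (M+1)) + U*(∑ j ∈ range (M+1), aq j * X^(j+1))
      + (U - 1)*(∑ j ∈ range (M+1), X^(j+1)*U^j) = U - 1 := by
  induction M with
  | zero =>
    rw [Finset.sum_range_one, Finset.sum_range_one]
    have h0 := step 0
    rw [gser_zero] at h0
    linear_combination h0
  | succ M ih =>
    rw [Finset.sum_range_succ (fun j => aq j * X^(j+1)) (M+1),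
      Finset.sum_range_succ (fun j => X^(j+1)*U^j) (M+1)]
    have hs := step (M+1)
    linear_combination ih + X^(M+1) * hs

lemma coeff_kill {A : ℚ⟦X⟧} {N k : ℕ} (h : (X : ℚ⟦X⟧)^N ∣ A) (hk : k < N) :
    PowerSeries.coeff k A = 0 :=
  (PowerSeries.X_pow_dvd_iff.mp h) k hk

lemma hJ : (1 - X*U)*(U - 1) = (1 - X*U)*U*(X*F) + (U - 1)*X := by
  ext k
  have htele := tele k
  have hT : (1 - X*U) * (∑ j ∈ range (k+1), X^(j+1)*U^j)
      = X - X^(k+2)*U^(k+1) := by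
    have h0 : ∀ j : ℕ, (1 - X*U)*(X^(j+1)*U^j) = X^(j+1)*U^j - X^((j+1)+1)*U^(j+1) := by
      intro j; ring
    calc (1 - X*U) * (∑ j ∈ range (k+1), X^(j+1)*U^j)
        = ∑ j ∈ range (k+1),
            ((fun j => X^(j+1)*U^j) j - (fun j => X^(j+1)*U^j) (j+1)) := by
          rw [Finset.mul_sum]
          exact Finset.sum_congr rfl fun j _ => h0 j
      _ = (fun j => X^(j+1)*U^j) 0 - (fun j => X^(j+1)*U^j) (k+1) :=
          Finset.sum_range_sub' (fun j => X^(j+1)*U^j) (k+1)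
      _ = X - X^(k+2)*U^(k+1) := by
          beta_reduce
          ring
  have hE : (1 - X*U)*(U - 1)
      = (1 - X*U)*(X^(k+1)*((U - 1)*gser (k+1)))
        + (1 - X*U)*U*(∑ j ∈ range (k+1), aq j * X^(j+1))
        + ((U - 1)*X - X^(k+2)*((U - 1)*U^(k+1))) := by
    linear_combination (-(1 - X*U)) * htele + (U - 1) * hT
  rw [hE]
  have z1 : PowerSeries.coeff k ((1 - X*U)*(X^(k+1)*((U - 1)*gser (k+1)))) = 0 :=
    coeff_kill (N := k+1) ((dvd_mul_right (X^(k+1)) _).mul_left _) (by omega)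
  have z2 : PowerSeries.coeff k (X^(k+2)*((U - 1)*U^(k+1))) = 0 :=
    coeff_kill (N := k+2) (dvd_mul_right _ _) (by omega)
  have z3 : PowerSeries.coeff k ((1 - X*U)*U*(∑ j ∈ range (k+1), aq j * X^(j+1)))
      = PowerSeries.coeff k ((1 - X*U)*U*(X*F)) := by
    have hd : (X : ℚ⟦X⟧)^(k+2) ∣ (X*F - ∑ j ∈ range (k+1), aq j * X^(j+1)) := by
      rw [PowerSeries.X_pow_dvd_iff]
      intro t ht
      rw [map_sub, map_sum]
      have hsum : ∀ j ∈ range (k+1),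
          PowerSeries.coeff t (aq j * X^(j+1))
            = if t = j+1 then PowerSeries.coeff j F else 0 := by
        intro j _
        rw [aq_eq, PowerSeries.coeff_C_mul, PowerSeries.coeff_X_pow]
        by_cases h : t = j + 1 <;> simp [h]
      rw [Finset.sum_congr rfl hsum]
      rcases t with _ | s
      · simp only [coeff_zero_eq_constantCoeff, map_mul, constantCoeff_X, zero_mul]
        rw [Finset.sum_eq_zero fun j _ => by simp]
        ring
      · rw [PowerSeries.coeff_succ_X_mul]
        have h2 : ∀ j ∈ range (k+1),
            (if s + 1 = j + 1 then PowerSeries.coeff j F else 0)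
              = (if j = s then PowerSeries.coeff j F else 0) := by
          intro j _
          by_cases h : j = s
          · simp [h]
          · rw [if_neg (by omega), if_neg h]
        rw [Finset.sum_congr rfl h2, Finset.sum_ite_eq' (range (k+1)) s
          (fun j => PowerSeries.coeff j F)]
        rw [if_pos (Finset.mem_range.mpr (by omega))]
        ring
    have hz : PowerSeries.coeff k
        ((1 - X*U)*U*(X*F) - (1 - X*U)*U*(∑ j ∈ range (k+1), aq j * X^(j+1))) = 0 := by
      have heq : (1 - X*U)*U*(X*F) - (1 - X*U)*U*(∑ j ∈ range (k+1), aq j * X^(j+1))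
          = (1 - X*U)*U*(X*F - ∑ j ∈ range (k+1), aq j * X^(j+1)) := by ring
      rw [heq]
      exact coeff_kill (Dvd.dvd.mul_left hd _) (by omega)
    rw [map_sub] at hz
    linarith [hz]
  rw [map_add, map_add, map_sub, z1, z2, z3, map_add]
  ring

lemma hXUeq : (U - 1)*(1 - X - X*U) = X*U := by
  linear_combination -hK

lemma XU_ne : (X*U : ℚ⟦X⟧) ≠ 0 := by
  intro h
  have h1 := congrArg (PowerSeries.coeff 1) h
  rw [PowerSeries.coeff_succ_X_mul, coeff_zero_eq_constantCoeff, constantCoeff_U] at h1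
  simpa using h1

lemma one_sub_XU_ne : ((1 : ℚ⟦X⟧) - X*U) ≠ 0 := by
  intro h
  have h1 := congrArg (PowerSeries.constantCoeff) h
  rw [map_sub, map_one, map_mul, constantCoeff_X, zero_mul, sub_zero] at h1
  simpa using h1

lemma hF : F * (1 - X*U) = 1 := by
  have hcancel : (X*U) * (F*(1 - X*U)) = (X*U) * 1 := by
    linear_combination -hJ + hXUeq
  exact mul_left_cancel₀ XU_ne hcancel

lemma h2F : ((2 : ℚ⟦X⟧) - X)*F = 1 + U := by
  have h3 : (((2 : ℚ⟦X⟧) - X)*F)*(1 - X*U) = (1 + U)*(1 - X*U) := by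
    linear_combination (2 - X)*hF + hK
  exact mul_right_cancel₀ one_sub_XU_ne h3

theorem stmt :
    (1 + PowerSeries.X - 2 * PowerSeries.X * (2 - PowerSeries.X) * F) ^ 2
      = 1 - 6 * PowerSeries.X + 5 * PowerSeries.X ^ 2 := by
  linear_combination (-2*X*((1 + X - 2*X*((2 - X)*F)) + (1 - X - 2*X*U))) * h2F
    + (4*X) * hK
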